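/- Ins shifts the target but not the source of a straddling Move: for j < i ≤ k (so j ≠ k), applying Move[j, k] then Ins[i, t] equals applying Ins[i, t] then Move[j, k+1]; and for k < i ≤ j, applying Move[j, k] then Ins[i, t] equals applying Ins[i, t] then Move[j+1, k]. -/

import Mathlib

/-- Atomic types of document components. -/
inductive Ty where
  | num | str | bool | del
deriving DecidableEq, Repr

/-- A document is a tuple (list) of atomic types. -/
abbrev Doc := List Ty

/-- Edit operations (1-based indices). `ins i t p` inserts type `t` at index `i`
    (with unique identifier `p`), shifting indices ≥ i right; `conv i t` sets the
    type at index `i` to `t`; `move i j` sets index `i` to the type at index `j`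
    and sets index `j` to the tombstone `del`. -/
inductive Edit where
  | id
  | ins (i : ℕ) (t : Ty) (p : ℕ)
  | conv (i : ℕ) (t : Ty)
  | move (i j : ℕ)
deriving DecidableEq, Repr

/-- Partial action of an edit on a document (1-based indices). -/
def Edit.apply : Edit → Doc → Option Doc
  | .id, d => some d
  | .ins i t _, d =>
      if 1 ≤ i ∧ i ≤ d.length + 1 then
        some (d.take (i-1) ++ t :: d.drop (i-1))
      else none
  | .conv i t, d =>
      if 1 ≤ i ∧ i ≤ d.length then some (d.set (i-1) t) else none
  | .move i j, d =>
      if 1 ≤ i ∧ i ≤ d.length ∧ 1 ≤ j ∧ j ≤ d.length ∧ i ≠ j then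
        some ((d.set (i-1) (d.getD (j-1) .del)).set (j-1) .del)
      else none


lemma ins_get (d : List Ty) (m n : ℕ) (t : Ty) (hm : m ≤ d.length) :
    (d.take m ++ t :: d.drop m)[n]? =
      if n < m then d[n]? else if n = m then some t else d[n-1]? := by
  rcases lt_trichotomy n m with h|h|h
  · rw [List.getElem?_append_left (by simp only [List.length_take]; omega)]
    simp [List.getElem?_take, h]
  · subst h
    rw [List.getElem?_append_right (by simp only [List.length_take]; omega)]
    simp [hm]
  · rw [List.getElem?_append_right (by simp only [List.length_take]; omega)]
    have : n - (d.take m).length = n - m := by simp [hm]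
    rw [this]
    have h2 : n - m = (n - m - 1) + 1 := by omega
    rw [h2]
    simp only [List.getElem?_cons_succ, List.getElem?_drop]
    have : m + (n - m - 1) = n - 1 := by omega
    rw [this, if_neg (by omega), if_neg (by omega)]

/-- Ins shifts the target but not the source of a straddling Move:
for `j < i ≤ k`, `Move[j,k]` then `Ins[i,t]` equals `Ins[i,t]` then `Move[j,k+1]`;
and for `k < i ≤ j`, `Move[j,k]` then `Ins[i,t]` equals `Ins[i,t]` then `Move[j+1,k]`. -/
theorem ins_straddles_move (i j k : ℕ) (t : Ty) (p : ℕ) :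
    (∀ d r₁ r₂ : Doc, j < i → i ≤ k →
      ((Edit.move j k).apply d >>= (Edit.ins i t p).apply) = some r₁ →
      ((Edit.ins i t p).apply d >>= (Edit.move j (k+1)).apply) = some r₂ →
      r₁ = r₂) ∧
    (∀ d r₁ r₂ : Doc, k < i → i ≤ j →
      ((Edit.move j k).apply d >>= (Edit.ins i t p).apply) = some r₁ →
      ((Edit.ins i t p).apply d >>= (Edit.move (j+1) k).apply) = some r₂ →
      r₁ = r₂) := by
  constructor
  · intro d r₁ r₂ hji hik h1 h2
    simp only [Edit.apply, Option.bind_eq_bind] at h1 h2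
    rcases Option.bind_eq_some_iff.mp h1 with ⟨a, ha, ha2⟩
    rcases Option.bind_eq_some_iff.mp h2 with ⟨b, hb, hb2⟩
    simp only [Edit.apply] at ha2 hb2
    rw [Option.ite_none_right_eq_some, Option.some.injEq] at ha ha2 hb hb2
    obtain ⟨⟨hj1, hjL, hk1, hkL, hjk⟩, rfl⟩ := ha
    obtain ⟨hc2, rfl⟩ := ha2
    obtain ⟨hc3, rfl⟩ := hb
    obtain ⟨⟨_, hjL2, _, hkL2, _⟩, rfl⟩ := hb2
    simp only [List.length_set] at hc2
    simp only [List.length_append, List.length_take, List.length_cons,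
      List.length_drop] at hjL2 hkL2
    apply List.ext_getElem?
    intro n
    rw [ins_get _ _ _ _ (by simp only [List.length_set]; omega)]
    rw [List.getD_eq_getElem?_getD, List.getD_eq_getElem?_getD]
    rw [ins_get _ _ _ _ (by omega)]
    simp only [List.getElem?_set, List.length_set, List.length_append, List.length_take,
      List.length_cons, List.length_drop]
    have hkk : k + 1 - 1 = k := by omega
    rw [hkk]
    have hL : (i - 1) ⊓ d.length + (d.length - (i - 1) + 1) = d.length + 1 := by omega
    rw [hL]
    rw [if_pos (show k - 1 < d.length by omega), if_pos (show j - 1 < d.length by omega),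
      if_pos (show k < d.length + 1 by omega), if_pos (show j - 1 < d.length + 1 by omega),
      if_neg (show ¬ k < i - 1 by omega), if_neg (show ¬ k = i - 1 by omega)]
    rw [ins_get d (i-1) n t (by omega)]
    split_ifs <;> first | rfl | omega | (exfalso; omega) | (congr 1; omega)
  · intro d r₁ r₂ hki hij h1 h2
    simp only [Edit.apply, Option.bind_eq_bind] at h1 h2
    rcases Option.bind_eq_some_iff.mp h1 with ⟨a, ha, ha2⟩
    rcases Option.bind_eq_some_iff.mp h2 with ⟨b, hb, hb2⟩
    simp only [Edit.apply] at ha2 hb2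
    rw [Option.ite_none_right_eq_some, Option.some.injEq] at ha ha2 hb hb2
    obtain ⟨⟨hj1, hjL, hk1, hkL, hjk⟩, rfl⟩ := ha
    obtain ⟨hc2, rfl⟩ := ha2
    obtain ⟨hc3, rfl⟩ := hb
    obtain ⟨⟨_, hjL2, _, hkL2, _⟩, rfl⟩ := hb2
    simp only [List.length_set] at hc2
    simp only [List.length_append, List.length_take, List.length_cons,
      List.length_drop] at hjL2 hkL2
    apply List.ext_getElem?
    intro n
    rw [ins_get _ _ _ _ (by simp only [List.length_set]; omega)]
    rw [List.getD_eq_getElem?_getD, List.getD_eq_getElem?_getD]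
    rw [ins_get _ _ _ _ (by omega)]
    simp only [List.getElem?_set, List.length_set, List.length_append, List.length_take,
      List.length_cons, List.length_drop]
    have hjj : j + 1 - 1 = j := by omega
    rw [hjj]
    have hL : (i - 1) ⊓ d.length + (d.length - (i - 1) + 1) = d.length + 1 := by omega
    rw [hL]
    rw [if_pos (show k - 1 < d.length by omega), if_pos (show j - 1 < d.length by omega),
      if_pos (show k - 1 < d.length + 1 by omega), if_pos (show j < d.length + 1 by omega),
      if_pos (show k - 1 < i - 1 by omega)]
    rw [ins_get d (i-1) n t (by omega)]
    split_ifs <;> first | rfl | omega | (exfalso; omega) | (congr 1; omega)
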